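/- Let m ≥ 2 be an integer, c ∈ ℝ, α > 0, and let p(n) ∈ [0,1] be a sequence such that p(n) ≤ (1−α)·(log n + c)/n for all sufficiently large n. Then the probability that B_m(n, p(n)) is primitive tends to 0 as n → ∞. -/

import Mathlib

open Matrix Filter

/-- The 0/1 matrix (over `ℕ`) associated to a Boolean matrix of entries. -/
def toMat {n : ℕ} (b : Fin n → Fin n → Bool) : Matrix (Fin n) (Fin n) ℕ :=
  Matrix.of fun i j => if b i j then 1 else 0

open Classical in
/-- The probability that the random set `B_m(n, p)` of `m` independent random `n × n`
binary matrices, whose `m · n²` entries are i.i.d. Bernoulli(`p`), satisfies `E`. -/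
noncomputable def bernoulliProb (n m : ℕ) (p : ℝ)
    (E : (Fin m → Matrix (Fin n) (Fin n) ℕ) → Prop) : ℝ :=
  ∑ b : Fin m → Fin n → Fin n → Bool,
    if E (fun k => toMat (b k)) then
      ∏ k : Fin m, ∏ i : Fin n, ∏ j : Fin n, (if b k i j then p else 1 - p)
    else 0

/-- A set `{M 0, ..., M (m-1)}` of `n × n` matrices over `ℕ` is primitive if some nonempty
product of its elements (repetitions allowed) has all entries positive. -/
def IsPrimitive {n m : ℕ} (M : Fin m → Matrix (Fin n) (Fin n) ℕ) : Prop :=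
  ∃ w : List (Fin m), w ≠ [] ∧ ∀ i j, 0 < (w.map M).prod i j

section Aux
open Classical
variable {n m : ℕ} {p : ℝ}

noncomputable def W (p : ℝ) {n : ℕ} (a : Fin n → Fin n → Bool) : ℝ :=
  ∏ i, ∏ j, (if a i j then p else 1 - p)

lemma W_nonneg (hp0 : 0 ≤ p) (hp1 : p ≤ 1) (a : Fin n → Fin n → Bool) : 0 ≤ W p a :=
  Finset.prod_nonneg fun i _ => Finset.prod_nonneg fun j _ => by
    split <;> linarith

lemma sum_pi_prod {ι κ : Type*} [Fintype ι] [DecidableEq ι] [Fintype κ]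
    (f : ι → κ → ℝ) : ∑ b : ι → κ, ∏ i, f i (b i) = ∏ i, ∑ x, f i x :=
  (Fintype.prod_sum f).symm

lemma sum_row : ∑ r : Fin n → Bool, ∏ j, (if r j then p else 1 - p) = 1 := by
  rw [sum_pi_prod fun (j : Fin n) (x : Bool) => if x then p else 1 - p]
  have : ∀ j : Fin n, (∑ x : Bool, if x then p else 1 - p) = 1 := by
    intro j; rw [Fintype.sum_bool]; norm_num
  rw [Finset.prod_congr rfl fun j _ => this j, Finset.prod_const_one]

lemma sum_W : ∑ a : Fin n → Fin n → Bool, W p a = 1 := by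
  unfold W
  rw [sum_pi_prod fun (i : Fin n) (r : Fin n → Bool) => ∏ j, (if r j then p else 1 - p)]
  rw [Finset.prod_congr rfl fun i _ => sum_row, Finset.prod_const_one]

lemma row_prob : ∑ r : Fin n → Bool,
    (if ∃ j, r j = true then ∏ j, (if r j then p else 1 - p) else 0)
    = 1 - (1 - p) ^ n := by
  have key : ∀ r : Fin n → Bool,
      (if ∃ j, r j = true then ∏ j, (if r j then p else 1 - p) else 0)
      = (∏ j, (if r j then p else 1 - p))
        - (if r = (fun _ => false) then ∏ j, (if r j then p else 1 - p) else 0) := by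
    intro r
    by_cases h : ∃ j, r j = true
    · rw [if_pos h, if_neg, sub_zero]
      rintro rfl; simp at h
    · rw [if_neg h, if_pos, sub_self]
      push_neg at h
      funext j
      simpa using h j
  rw [Finset.sum_congr rfl fun r _ => key r, Finset.sum_sub_distrib, sum_row]
  congr 1
  rw [Finset.sum_ite_eq' Finset.univ (fun _ => false)
    (fun r => ∏ j, (if r j then p else 1 - p)), if_pos (Finset.mem_univ _)]
  simp

lemma single_prob : ∑ a : Fin n → Fin n → Bool,
    (if (∀ i, ∃ j, a i j = true) then W p a else 0)
    = (1 - (1 - p) ^ n) ^ n := by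
  have key : ∀ a : Fin n → Fin n → Bool,
      (if (∀ i, ∃ j, a i j = true) then W p a else 0)
      = ∏ i, (if ∃ j, a i j = true then ∏ j, (if a i j then p else 1 - p) else 0) := by
    intro a
    by_cases h : ∀ i, ∃ j, a i j = true
    · rw [if_pos h]
      exact Finset.prod_congr rfl fun i _ => (if_pos (h i)).symm
    · rw [if_neg h]
      push_neg at h
      obtain ⟨i₀, hi⟩ := h
      refine (Finset.prod_eq_zero
        (f := fun i => if ∃ j, a i j = true then ∏ j, (if a i j then p else 1 - p) else 0)
        (Finset.mem_univ i₀) ?_).symm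
      beta_reduce
      rw [if_neg]
      rintro ⟨j, hj⟩
      exact absurd hj (by simpa using hi j)
  rw [Finset.sum_congr rfl fun a _ => key a]
  rw [sum_pi_prod fun (i : Fin n) (r : Fin n → Bool) =>
    if ∃ j, r j = true then ∏ j, (if r j then p else 1 - p) else 0]
  rw [Finset.prod_congr rfl fun i _ => row_prob, Finset.prod_const, Finset.card_univ,
    Fintype.card_fin]


lemma primitive_row (hn : 0 < n) (b : Fin m → Fin n → Fin n → Bool)
    (h : IsPrimitive fun k => toMat (b k)) : ∃ k, ∀ i, ∃ j, b k i j = true := by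
  obtain ⟨w, hw, hpos⟩ := h
  cases w with
  | nil => exact absurd rfl hw
  | cons k t =>
    refine ⟨k, fun i => ?_⟩
    have h0 := hpos i ⟨0, hn⟩
    rw [List.map_cons, List.prod_cons, Matrix.mul_apply] at h0
    by_contra hc
    push_neg at hc
    have hz : ∀ l, toMat (b k) i l = 0 := by
      intro l
      simp [toMat, hc l]
    simp only [hz, zero_mul, Finset.sum_const_zero] at h0
    exact lt_irrefl 0 h0

lemma prob_le (hn : 0 < n) (hp0 : 0 ≤ p) (hp1 : p ≤ 1) (m : ℕ) :
    bernoulliProb n m p (fun M => IsPrimitive M) ≤ m * (1 - (1 - p) ^ n) ^ n := by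
  unfold bernoulliProb
  have hnn : ∀ b : Fin m → Fin n → Fin n → Bool, ∀ k : Fin m,
      0 ≤ (if (∀ i, ∃ j, b k i j = true) then ∏ k' : Fin m, W p (b k') else 0) := by
    intro b k
    split
    · exact Finset.prod_nonneg fun k' _ => W_nonneg hp0 hp1 _
    · exact le_refl _
  have step1 : ∀ b : Fin m → Fin n → Fin n → Bool,
      (if IsPrimitive (fun k => toMat (b k)) then
        ∏ k : Fin m, ∏ i : Fin n, ∏ j : Fin n, (if b k i j then p else 1 - p) else 0)
      ≤ ∑ k : Fin m, (if (∀ i, ∃ j, b k i j = true) then ∏ k' : Fin m, W p (b k') else 0) := by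
    intro b
    by_cases h : IsPrimitive (fun k => toMat (b k))
    · rw [if_pos h]
      obtain ⟨k₀, hk⟩ := primitive_row hn b h
      have h2 := Finset.single_le_sum
        (f := fun k => if (∀ i, ∃ j, b k i j = true) then ∏ k' : Fin m, W p (b k') else 0)
        (fun k _ => hnn b k) (Finset.mem_univ k₀)
      beta_reduce at h2
      rw [if_pos hk] at h2
      exact h2
    · rw [if_neg h]
      exact Finset.sum_nonneg fun k _ => hnn b k
  refine le_trans (Finset.sum_le_sum fun b _ => step1 b) (le_of_eq ?_)
  rw [Finset.sum_comm]
  have hone : ∀ k : Fin m, ∑ b : Fin m → Fin n → Fin n → Bool,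
      (if (∀ i, ∃ j, b k i j = true) then ∏ k' : Fin m, W p (b k') else 0)
      = (1 - (1 - p) ^ n) ^ n := by
    intro k
    have hterm : ∀ b : Fin m → Fin n → Fin n → Bool,
        (if (∀ i, ∃ j, b k i j = true) then ∏ k' : Fin m, W p (b k') else 0)
        = ∏ k' : Fin m, (if k' = k then
            (if (∀ i, ∃ j, b k' i j = true) then W p (b k') else 0) else W p (b k')) := by
      intro b
      by_cases h : ∀ i, ∃ j, b k i j = true
      · rw [if_pos h]
        refine Finset.prod_congr rfl fun k' _ => ?_
        split_ifs with h1 h2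
        · rfl
        · exact absurd (h1 ▸ h) h2
        · rfl
      · rw [if_neg h]
        refine (Finset.prod_eq_zero
          (f := fun k' => if k' = k then
            (if (∀ i, ∃ j, b k' i j = true) then W p (b k') else 0) else W p (b k'))
          (Finset.mem_univ k) ?_).symm
        simp only []
        rw [if_pos trivial, if_neg h]
    rw [Finset.sum_congr rfl fun b _ => hterm b]
    rw [sum_pi_prod fun (k' : Fin m) (a : Fin n → Fin n → Bool) =>
      if k' = k then (if (∀ i, ∃ j, a i j = true) then W p a else 0) else W p a]
    have hfac : ∀ k' : Fin m,
        (∑ a : Fin n → Fin n → Bool,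
          if k' = k then (if (∀ i, ∃ j, a i j = true) then W p a else 0) else W p a)
        = if k' = k then (1 - (1 - p) ^ n) ^ n else 1 := by
      intro k'
      by_cases h : k' = k
      · rw [if_pos h, ← single_prob (p := p) (n := n)]
        exact Finset.sum_congr rfl fun a _ => if_pos h
      · rw [if_neg h, ← sum_W (p := p) (n := n)]
        exact Finset.sum_congr rfl fun a _ => if_neg h
    rw [Finset.prod_congr rfl fun k' _ => hfac k']
    rw [Finset.prod_ite_eq' Finset.univ k (fun _ => (1 - (1 - p) ^ n) ^ n),
      if_pos (Finset.mem_univ k)]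
  rw [Finset.sum_congr rfl fun k _ => hone k, Finset.sum_const, Finset.card_univ,
    Fintype.card_fin, nsmul_eq_mul]

lemma prob_nonneg (hp0 : 0 ≤ p) (hp1 : p ≤ 1)
    (E : (Fin m → Matrix (Fin n) (Fin n) ℕ) → Prop) : 0 ≤ bernoulliProb n m p E := by
  unfold bernoulliProb
  refine Finset.sum_nonneg fun b _ => ?_
  split
  · exact Finset.prod_nonneg fun k _ => W_nonneg hp0 hp1 (b k)
  · exact le_refl _

end Aux


/-- Let `m ≥ 2`, `c ∈ ℝ`, `α > 0`, and let `p n ∈ [0,1]` satisfy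
`p n ≤ (1-α)·(log n + c)/n` for all sufficiently large `n`.  Then the probability that
`B_m(n, p n)` is primitive tends to `0` as `n → ∞`. -/
theorem stmt3 (m : ℕ) (hm : 2 ≤ m) (c α : ℝ) (hα : 0 < α)
    (p : ℕ → ℝ) (hp : ∀ n, p n ∈ Set.Icc (0 : ℝ) 1)
    (hsmall : ∀ᶠ n : ℕ in atTop, p n ≤ (1 - α) * (Real.log n + c) / n) :
    Tendsto (fun n : ℕ => bernoulliProb n m (p n) (fun M => IsPrimitive M))
      atTop (nhds 0) := by
  set β := min α (1/2) with hβdef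
  have hβ0 : 0 < β := lt_min hα (by norm_num)
  have hβ2 : β ≤ 1/2 := min_le_right _ _
  have hβα : β ≤ α := min_le_left _ _
  have hlogn : Tendsto (fun n : ℕ => Real.log n) atTop atTop :=
    Real.tendsto_log_atTop.comp tendsto_natCast_atTop_atTop
  have hlogc : Tendsto (fun n : ℕ => Real.log n + c) atTop atTop :=
    tendsto_atTop_add_const_right _ c hlogn
  -- the weaker bound with β
  have hsmall' : ∀ᶠ n : ℕ in atTop, p n ≤ (1 - β) * (Real.log n + c) / n := by
    filter_upwards [hsmall, hlogc.eventually_ge_atTop 0, eventually_gt_atTop 0]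
      with n h1 h2 hn
    have hn' : (0 : ℝ) < n := Nat.cast_pos.mpr hn
    refine h1.trans ?_
    have : (1 - α) * (Real.log n + c) ≤ (1 - β) * (Real.log n + c) :=
      mul_le_mul_of_nonneg_right (by linarith) h2
    exact (div_le_div_iff_of_pos_right hn').mpr this
  -- auxiliary real limits
  have hlogx : Tendsto (fun x : ℝ => Real.log x / x) atTop (nhds 0) := by
    simpa using Real.tendsto_pow_log_div_mul_add_atTop 1 0 1 one_ne_zero
  have hlog2 : Tendsto (fun x : ℝ => Real.log x ^ 2 / x) atTop (nhds 0) := by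
    simpa using Real.tendsto_pow_log_div_mul_add_atTop 1 0 2 one_ne_zero
  have hinv : Tendsto (fun x : ℝ => x⁻¹) atTop (nhds (0 : ℝ)) := tendsto_inv_atTop_zero
  set G : ℝ → ℝ := fun x => (1 - β) * (Real.log x + c) / x with hGdef
  set F : ℝ → ℝ := fun x => ((1 - β) * (Real.log x + c)) ^ 2 / x with hFdef
  have hG : Tendsto G atTop (nhds 0) := by
    have hGeq : G = fun x => (1 - β) * (Real.log x / x) + ((1 - β) * c) * x⁻¹ := by
      funext x; simp only [hGdef]; ring
    rw [hGeq]
    simpa using (hlogx.const_mul (1 - β)).add (hinv.const_mul ((1 - β) * c))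
  have hF : Tendsto F atTop (nhds 0) := by
    have hFeq : F = fun x => ((1 - β) ^ 2) * (Real.log x ^ 2 / x)
        + (2 * c * (1 - β) ^ 2) * (Real.log x / x) + (c ^ 2 * (1 - β) ^ 2) * x⁻¹ := by
      funext x; simp only [hFdef]; ring
    rw [hFeq]
    simpa using ((hlog2.const_mul ((1 - β) ^ 2)).add
      (hlogx.const_mul (2 * c * (1 - β) ^ 2))).add (hinv.const_mul (c ^ 2 * (1 - β) ^ 2))
  have hGn : Tendsto (fun n : ℕ => G n) atTop (nhds 0) := hG.comp tendsto_natCast_atTop_atTop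
  have hFn : Tendsto (fun n : ℕ => F n) atTop (nhds 0) := hF.comp tendsto_natCast_atTop_atTop
  have hhalf : ∀ᶠ n : ℕ in atTop, p n ≤ 1 / 2 := by
    filter_upwards [hsmall', hGn.eventually_le_const (by norm_num : (0:ℝ) < 1/2)] with n h1 h2
    exact h1.trans h2
  -- lower bound for log n + n log(1 - p n)
  have hh' : Tendsto (fun n : ℕ => β * Real.log n - (1 - β) * c - 2 * F n) atTop atTop := by
    have h1 : Tendsto (fun n : ℕ => β * Real.log n) atTop atTop :=
      hlogn.const_mul_atTop hβ0
    have h2 : Tendsto (fun n : ℕ => -((1 - β) * c) - 2 * F n) atTop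
        (nhds (-((1 - β) * c) - 2 * 0)) := tendsto_const_nhds.sub (hFn.const_mul 2)
    have := h2.add_atTop h1
    refine this.congr fun n => ?_
    ring
  have hg : Tendsto (fun n : ℕ => Real.log n + (n : ℝ) * Real.log (1 - p n)) atTop atTop := by
    refine tendsto_atTop_mono' atTop ?_ hh'
    filter_upwards [hsmall', hhalf, hlogc.eventually_ge_atTop 0, eventually_gt_atTop 0]
      with n h1 h2 h3 hn
    have hn' : (0 : ℝ) < n := Nat.cast_pos.mpr hn
    have hp0 := (hp n).1
    set q := p n with hq
    have h1p : 0 < 1 - q := by linarith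
    -- log (1 - q) ≥ -q - 2q²
    have hlb : -q - 2 * q ^ 2 ≤ Real.log (1 - q) := by
      have hlog_inv : Real.log (1 - q)⁻¹ ≤ (1 - q)⁻¹ - 1 :=
        Real.log_le_sub_one_of_pos (inv_pos.mpr h1p)
      rw [Real.log_inv] at hlog_inv
      have hinvle : (1 - q)⁻¹ ≤ 1 + q + 2 * q ^ 2 := by
        rw [inv_eq_one_div, div_le_iff₀ h1p]
        nlinarith
      linarith
    -- np ≤ L and np² ≤ L²/n
    set L := (1 - β) * (Real.log n + c) with hL
    have hL0 : 0 ≤ L := mul_nonneg (by linarith) h3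
    have hnpL : q * n ≤ L := by
      rw [← le_div_iff₀ hn']
      exact h1
    have hq2 : (n : ℝ) * q ^ 2 ≤ L ^ 2 / n := by
      rw [le_div_iff₀ hn']
      have h0 : 0 ≤ q * n := mul_nonneg hp0 hn'.le
      nlinarith [mul_self_nonneg (q * n)]
    have hFv : F n = L ^ 2 / n := rfl
    have hmul : (n : ℝ) * (-q - 2 * q ^ 2) ≤ (n : ℝ) * Real.log (1 - q) :=
      mul_le_mul_of_nonneg_left hlb hn'.le
    have hbq : β * Real.log n - (1 - β) * c - 2 * F n
        = Real.log n - L - 2 * (L ^ 2 / n) := by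
      rw [hL]; ring
    rw [hbq, hFv] at *
    nlinarith
  -- n (1-p)^n → ∞
  have ht : Tendsto (fun n : ℕ => (n : ℝ) * (1 - p n) ^ n) atTop atTop := by
    refine (Real.tendsto_exp_atTop.comp hg).congr' ?_
    filter_upwards [hhalf, eventually_gt_atTop 0] with n h2 hn
    have hn' : (0 : ℝ) < n := Nat.cast_pos.mpr hn
    have h1p : 0 < 1 - p n := by linarith
    simp only [Function.comp_apply]
    rw [Real.exp_add, Real.exp_log hn', Real.exp_nat_mul, Real.exp_log h1p]
  -- the upper bound tends to 0
  have hup : Tendsto (fun n : ℕ => (m : ℝ) * Real.exp (-((n : ℝ) * (1 - p n) ^ n)))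
      atTop (nhds 0) := by
    have h1 : Tendsto (fun n : ℕ => Real.exp (-((n : ℝ) * (1 - p n) ^ n))) atTop (nhds 0) :=
      Real.tendsto_exp_atBot.comp (tendsto_neg_atTop_atBot.comp ht)
    simpa using h1.const_mul (m : ℝ)
  refine squeeze_zero' ?_ ?_ hup
  · exact Eventually.of_forall fun n => prob_nonneg (hp n).1 (hp n).2 _
  · filter_upwards [eventually_gt_atTop 0] with n hn
    have hp0 := (hp n).1
    have hp1 := (hp n).2
    refine (prob_le hn hp0 hp1 m).trans ?_
    refine mul_le_mul_of_nonneg_left ?_ (Nat.cast_nonneg m)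
    have hx0 : (0 : ℝ) ≤ (1 - p n) ^ n := pow_nonneg (by linarith) n
    have hx1 : (1 - p n) ^ n ≤ 1 := pow_le_one₀ (by linarith) (by linarith)
    calc (1 - (1 - p n) ^ n) ^ n
        ≤ Real.exp (-((1 - p n) ^ n)) ^ n := by
          refine pow_le_pow_left₀ (by linarith) ?_ n
          have := Real.add_one_le_exp (-((1 - p n) ^ n))
          linarith
      _ = Real.exp (-((n : ℝ) * (1 - p n) ^ n)) := by
          rw [← Real.exp_nat_mul]
          ring_nf
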